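/- Let v₁,…,vₙ ∈ ℝᵈ. Then d ≥ n²/(n + Σ_{i≠j}(1 − ‖vᵢ − vⱼ‖²)²) − 3. -/

import Mathlib

open Matrix Finset

private lemma aux_rank_add_le {m n : Type*} [Fintype m] [Fintype n]
    (A B : Matrix m n ℝ) : (A + B).rank ≤ A.rank + B.rank := by
  classical
  rw [Matrix.rank, Matrix.rank, Matrix.rank]
  have h : LinearMap.range (A + B).mulVecLin ≤
      LinearMap.range A.mulVecLin ⊔ LinearMap.range B.mulVecLin := by
    rintro x ⟨y, rfl⟩
    exact Submodule.mem_sup.2 ⟨A.mulVecLin y, ⟨y, rfl⟩, B.mulVecLin y, ⟨y, rfl⟩, by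
      simp [Matrix.mulVecLin_add]⟩
  exact (Submodule.finrank_mono h).trans
    (Submodule.finrank_add_le_finrank_add_finrank _ _)

private lemma aux_rank_vecMulVec_le {m n : Type*} [Fintype m] [Fintype n] [DecidableEq n]
    (w : m → ℝ) (u : n → ℝ) : (Matrix.vecMulVec w u).rank ≤ 1 := by
  rw [Matrix.vecMulVec_eq (Fin 1)]
  exact (Matrix.rank_mul_le_left _ _).trans
    ((Matrix.rank_le_card_width _).trans (by simp))

private lemma aux_trace_sq_le {N : ℕ} (A : Matrix (Fin N) (Fin N) ℝ)
    (hA : A.IsHermitian) : A.trace ^ 2 ≤ (A.rank : ℝ) * (A * A).trace := by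
  classical
  set μ := hA.eigenvalues with hμ
  set U : Matrix (Fin N) (Fin N) ℝ := (hA.eigenvectorUnitary : Matrix (Fin N) (Fin N) ℝ) with hUdef
  have hUU : star U * U = 1 := Matrix.mem_unitaryGroup_iff'.mp hA.eigenvectorUnitary.2
  have hspec : A = U * Matrix.diagonal μ * star U := by
    have h := hA.spectral_theorem
    rwa [RCLike.ofReal_real_eq_id, Function.id_comp] at h
  have htr : A.trace = ∑ i, μ i := by
    rw [hspec, Matrix.trace_mul_cycle, hUU, Matrix.one_mul, Matrix.trace_diagonal]
  have htr2 : (A * A).trace = ∑ i, μ i ^ 2 := by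
    have hAA : A * A = U * (Matrix.diagonal μ * Matrix.diagonal μ) * star U := by
      conv_lhs => rw [hspec]
      simp only [Matrix.mul_assoc]
      rw [← Matrix.mul_assoc (star U) U, hUU, Matrix.one_mul]
    rw [hAA, Matrix.trace_mul_cycle, hUU, Matrix.one_mul,
      Matrix.diagonal_mul_diagonal, Matrix.trace_diagonal]
    simp [sq]
  set s := Finset.univ.filter fun i => μ i ≠ 0 with hs
  have hrank : (A.rank : ℝ) = (s.card : ℝ) := by
    rw [hA.rank_eq_card_non_zero_eigs]
    norm_cast
    exact Fintype.card_subtype _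
  have h1 : ∑ i, μ i = ∑ i ∈ s, μ i := (Finset.sum_filter_ne_zero _).symm
  have h2 : (∑ i ∈ s, μ i) ^ 2 ≤ (s.card : ℝ) * ∑ i ∈ s, μ i ^ 2 := by
    have h := Finset.sum_mul_sq_le_sq_mul_sq s (fun _ => (1 : ℝ)) μ
    simpa using h
  have h3 : ∑ i ∈ s, μ i ^ 2 ≤ ∑ i, μ i ^ 2 :=
    Finset.sum_le_sum_of_subset_of_nonneg (Finset.subset_univ s)
      (fun i _ _ => sq_nonneg _)
  rw [htr, htr2, hrank, h1]
  exact h2.trans (mul_le_mul_of_nonneg_left h3 (Nat.cast_nonneg _))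

/-- For any vectors `v₁, …, vₙ ∈ ℝᵈ`,
`d ≥ n² / (n + Σ_{i ≠ j} (1 - ‖vᵢ - vⱼ‖²)²) - 3`. -/
theorem stmt_10 (n d : ℕ) (v : Fin n → EuclideanSpace ℝ (Fin d)) :
    (n : ℝ) ^ 2 /
        ((n : ℝ) + ∑ p ∈ Finset.univ.offDiag, (1 - ‖v p.1 - v p.2‖ ^ 2) ^ 2) - 3
      ≤ (d : ℝ) := by
  classical
  set S : ℝ := ∑ p ∈ Finset.univ.offDiag, (1 - ‖v p.1 - v p.2‖ ^ 2) ^ 2 with hSdef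
  have hS : 0 ≤ S := Finset.sum_nonneg fun _ _ => sq_nonneg _
  set M : Matrix (Fin n) (Fin n) ℝ := Matrix.of fun i j => 1 - ‖v i - v j‖ ^ 2 with hMdef
  have hHerm : M.IsHermitian := by
    show Mᴴ = M
    ext i j
    simp [hMdef, Matrix.conjTranspose_apply, norm_sub_rev]
  have htrace : M.trace = (n : ℝ) := by
    simp [Matrix.trace, Matrix.diag, hMdef]
  have htrace2 : (M * M).trace = (n : ℝ) + S := by
    have h1 : (M * M).trace = ∑ p ∈ Finset.univ ×ˢ Finset.univ, (M p.1 p.2) ^ 2 := by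
      rw [Finset.sum_product]
      simp only [Matrix.trace, Matrix.diag, Matrix.mul_apply]
      refine Finset.sum_congr rfl fun i _ => Finset.sum_congr rfl fun j _ => ?_
      have : M j i = M i j := congrFun (congrFun hHerm i) j
      rw [sq, this]
    rw [h1, ← Finset.diag_union_offDiag,
      Finset.sum_union (Finset.disjoint_diag_offDiag _), Finset.sum_diag]
    have hdiag : ∀ i : Fin n, (M i i) ^ 2 = 1 := by
      intro i; simp [hMdef]
    rw [Finset.sum_congr rfl fun i _ => hdiag i]
    simp [hSdef, hMdef]
  -- rank bound
  set X : Matrix (Fin n) (Fin d) ℝ := Matrix.of fun i k => v i k with hX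
  set Y : Matrix (Fin d) (Fin n) ℝ := Matrix.of fun k j => 2 * v j k with hY
  have hdecomp : M = Matrix.vecMulVec (fun _ => (1 : ℝ)) (fun j => 1 - ‖v j‖ ^ 2)
      + Matrix.vecMulVec (fun i => -‖v i‖ ^ 2) (fun _ => (1 : ℝ)) + X * Y := by
    ext i j
    have hinner : (inner ℝ (v i) (v j) : ℝ) = ∑ k, v i k * v j k := by
      simp [PiLp.inner_apply, RCLike.inner_apply, conj_trivial, mul_comm]
    have hn : ‖v i - v j‖ ^ 2 = ‖v i‖ ^ 2 - 2 * (inner ℝ (v i) (v j) : ℝ) + ‖v j‖ ^ 2 :=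
      norm_sub_sq_real _ _
    simp only [hMdef, Matrix.add_apply, Matrix.vecMulVec_apply, Matrix.mul_apply,
      Matrix.of_apply, hX, hY]
    rw [hn, hinner]
    have hsum : ∑ k, v i k * (2 * v j k) = 2 * ∑ k, v i k * v j k := by
      rw [Finset.mul_sum]; exact Finset.sum_congr rfl fun x _ => by ring
    rw [hsum]; ring
  have hrankM : M.rank ≤ d + 3 := by
    rw [hdecomp]
    have r1 := aux_rank_add_le (Matrix.vecMulVec (fun _ => (1 : ℝ)) (fun j => 1 - ‖v j‖ ^ 2)
      + Matrix.vecMulVec (fun i => -‖v i‖ ^ 2) (fun _ => (1 : ℝ))) (X * Y)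
    have r2 := aux_rank_add_le (Matrix.vecMulVec (fun _ => (1 : ℝ)) (fun j => 1 - ‖v j‖ ^ 2))
      (Matrix.vecMulVec (fun i => -‖v i‖ ^ 2) (fun _ => (1 : ℝ)))
    have r3 := aux_rank_vecMulVec_le (fun _ : Fin n => (1 : ℝ)) (fun j => 1 - ‖v j‖ ^ 2)
    have r4 := aux_rank_vecMulVec_le (fun i : Fin n => -‖v i‖ ^ 2) (fun _ : Fin n => (1 : ℝ))
    have r5 : (X * Y).rank ≤ d :=
      (Matrix.rank_mul_le_left X Y).trans ((Matrix.rank_le_card_width X).trans (by simp))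
    omega
  have key : (n : ℝ) ^ 2 ≤ ((d : ℝ) + 3) * ((n : ℝ) + S) := by
    have h := aux_trace_sq_le M hHerm
    rw [htrace, htrace2] at h
    have hr : (M.rank : ℝ) ≤ (d : ℝ) + 3 := by exact_mod_cast hrankM
    have hnS : (0 : ℝ) ≤ (n : ℝ) + S := by positivity
    nlinarith
  rcases eq_or_lt_of_le (show (0 : ℝ) ≤ (n : ℝ) + S by positivity) with h0 | h0
  · rw [← h0, div_zero]
    have : (0 : ℝ) ≤ d := Nat.cast_nonneg _
    linarith
  · have hdiv : (n : ℝ) ^ 2 / ((n : ℝ) + S) ≤ (d : ℝ) + 3 := (div_le_iff₀ h0).mpr key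
    linarith
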